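/- Every locally σ-compact Hausdorff rectifiable space with a bc-base is locally compact or zero-dimensional. -/

import Mathlib

open Set TopologicalSpace

section RectifiableAux

variable {G : Type*} [TopologicalSpace G]

/-- Dependent choice helper for building recursive sequences. -/
lemma auxDepChoice {α : Type*} (P : ℕ → α → Prop) (R : ℕ → α → α → Prop)
    (h0 : ∃ a, P 0 a) (hstep : ∀ n a, P n a → ∃ b, P (n + 1) b ∧ R n a b) :
    ∃ f : ℕ → α, (∀ n, P n (f n)) ∧ ∀ n, R n (f n) (f (n + 1)) := by
  choose b hb hR using hstep
  let F : ∀ n : ℕ, {a // P n a} := fun n =>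
    Nat.rec (motive := fun n => {a // P n a}) ⟨h0.choose, h0.choose_spec⟩
      (fun n ih => ⟨b n ih.1 ih.2, hb n ih.1 ih.2⟩) n
  exact ⟨fun n => (F n).1, fun n => (F n).2, fun n => hR n (F n).1 (F n).2⟩

/-- Boundary of a finite union is contained in the union of boundaries. -/
lemma aux_bdry_biUnion {ι : Type*} {s : Set ι} (hs : s.Finite) (f : ι → Set G) :
    closure (⋃ i ∈ s, f i) \ (⋃ i ∈ s, f i) ⊆ ⋃ i ∈ s, (closure (f i) \ f i) := by
  intro y hy
  obtain ⟨hy1, hy2⟩ := hy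
  rw [hs.closure_biUnion] at hy1
  simp only [mem_iUnion] at hy1 ⊢
  obtain ⟨i, hi, hyi⟩ := hy1
  exact ⟨i, hi, hyi, fun h => hy2 (mem_biUnion hi h)⟩

variable (e : G) (p q : G × G → G)

lemma aux_p_e (hpq : ∀ x y : G, p (x, q (x, y)) = y) (hqe : ∀ x : G, q (x, x) = e) (t : G) :
    p (t, e) = t := by
  have h := hpq t t
  rwa [hqe] at h

/-- If `y` is in the closure of `A`, there is `a ∈ A` with `q (a, y)` in a given
neighborhood of `e`. -/
lemma aux_mem_closure (hq : Continuous q) (hqe : ∀ x : G, q (x, x) = e)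
    {A : Set G} {y : G} (hy : y ∈ closure A) {O : Set G} (hO : IsOpen O) (heO : e ∈ O) :
    ∃ a ∈ A, q (a, y) ∈ O := by
  have hN : IsOpen {z : G | q (z, y) ∈ O} :=
    hO.preimage (hq.comp (continuous_id.prodMk continuous_const))
  have hyN : y ∈ {z : G | q (z, y) ∈ O} := by
    simp only [mem_setOf_eq, hqe y]; exact heO
  obtain ⟨a, haN, haA⟩ := mem_closure_iff.mp hy _ hN hyN
  exact ⟨a, haA, haN⟩

/-- Regularity at compact sets: a compact set inside an open set admits an open
neighborhood whose closure stays inside. -/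
lemma aux_R (hp : Continuous p) (hq : Continuous q)
    (hpq : ∀ x y : G, p (x, q (x, y)) = y) (hqe : ∀ x : G, q (x, x) = e)
    {K S : Set G} (hK : IsCompact K) (hS : IsOpen S) (hKS : K ⊆ S) :
    ∃ T : Set G, IsOpen T ∧ K ⊆ T ∧ closure T ⊆ S := by
  have Hc : Continuous fun x : G × G × G => p (p (x.1, x.2.1), x.2.2) :=
    hp.comp ((hp.comp (continuous_fst.prodMk
      (continuous_fst.comp continuous_snd))).prodMk (continuous_snd.comp continuous_snd))
  have key : ∀ k ∈ K, ∃ u v : Set G, IsOpen u ∧ IsOpen v ∧ k ∈ u ∧ e ∈ v ∧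
      ∀ a ∈ u, ∀ b ∈ v, ∀ c ∈ v, p (p (a, b), c) ∈ S := by
    intro k hk
    have hmem : ((k, e, e) : G × G × G) ∈
        (fun x : G × G × G => p (p (x.1, x.2.1), x.2.2)) ⁻¹' S := by
      simp only [mem_preimage, aux_p_e e p q hpq hqe]
      exact hKS hk
    obtain ⟨u, w, hu, hw, hku, hew, huw⟩ :=
      isOpen_prod_iff.mp (hS.preimage Hc) k (e, e) hmem
    obtain ⟨v1, v2, hv1, hv2, he1, he2, hv12⟩ := isOpen_prod_iff.mp hw e e hew
    refine ⟨u, v1 ∩ v2, hu, hv1.inter hv2, hku, ⟨he1, he2⟩, fun a ha b hb c hc => ?_⟩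
    exact huw (mk_mem_prod ha (hv12 (mk_mem_prod hb.1 hc.2)))
  choose! u v hu hv hku hev hprop using key
  obtain ⟨b', hb'K, hb'fin, hb'cov⟩ := hK.elim_finite_subcover_image
    (fun k hk => hu k hk) (fun k hk => mem_biUnion hk (hku k hk))
  set O : Set G := ⋂ k ∈ b', v k with hO_def
  have hOopen : IsOpen O := hb'fin.isOpen_biInter fun k hk => hv k (hb'K hk)
  have heO : e ∈ O := mem_biInter fun k hk => hev k (hb'K hk)
  refine ⟨{y | ∃ k ∈ K, q (k, y) ∈ O}, ?_, ?_, ?_⟩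
  · have : {y | ∃ k ∈ K, q (k, y) ∈ O} = ⋃ k ∈ K, {y | q (k, y) ∈ O} := by
      ext z; simp [mem_iUnion]
    rw [this]
    exact isOpen_biUnion fun k _ =>
      hOopen.preimage (hq.comp (continuous_const.prodMk continuous_id))
  · intro k hk
    exact ⟨k, hk, by rw [hqe]; exact heO⟩
  · intro y hy
    obtain ⟨a, ⟨k, hk, hka⟩, hay⟩ := aux_mem_closure e q hq hqe hy hOopen heO
    obtain ⟨k', hk', hkk'⟩ := mem_iUnion₂.mp (hb'cov hk)
    have h1 : q (k, a) ∈ v k' := (biInter_subset_of_mem hk') hka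
    have h2 : q (a, y) ∈ v k' := (biInter_subset_of_mem hk') hay
    have := hprop k' (hb'K hk') k hkk' (q (k, a)) h1 (q (a, y)) h2
    rwa [hpq, hpq] at this

end RectifiableAux

section RectifiableMain

variable {G : Type*} [TopologicalSpace G] [T2Space G]
variable (e : G) (p q : G × G → G)
variable (hp : Continuous p) (hq : Continuous q)
variable (hpq : ∀ x y : G, p (x, q (x, y)) = y)
variable (hqp : ∀ x y : G, q (x, p (x, y)) = y)
variable (hqe : ∀ x : G, q (x, x) = e)

include hp hq hpq hqp hqe in
/-- If one point has a compact neighborhood, the space is weakly locally compact. -/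
lemma aux_wlc (h : ∃ x₀ : G, ∃ C : Set G, C ∈ nhds x₀ ∧ IsCompact C) :
    WeaklyLocallyCompactSpace G := by
  obtain ⟨x₀, C, hCn, hCc⟩ := h
  constructor
  intro t
  set f : G → G := fun y => p (t, q (x₀, y)) with hf_def
  set g : G → G := fun y => p (x₀, q (t, y)) with hg_def
  have hf : Continuous f :=
    hp.comp (continuous_const.prodMk (hq.comp (continuous_const.prodMk continuous_id)))
  have hg : Continuous g :=
    hp.comp (continuous_const.prodMk (hq.comp (continuous_const.prodMk continuous_id)))
  have hgf : ∀ y, g (f y) = y := fun y => by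
    simp only [hf_def, hg_def, hqp, hpq]
  have hfg : ∀ y, f (g y) = y := fun y => by
    simp only [hf_def, hg_def, hqp, hpq]
  obtain ⟨M, hMC, hM, hxM⟩ := mem_nhds_iff.mp hCn
  refine ⟨f '' C, hCc.image hf, ?_⟩
  have himg : f '' M = g ⁻¹' M := by
    ext z
    constructor
    · rintro ⟨y, hy, rfl⟩; rwa [mem_preimage, hgf]
    · intro hz; exact ⟨g z, hz, hfg z⟩
  have hftx : f x₀ = t := by
    simp only [hf_def, hqe]
    exact aux_p_e e p q hpq hqe t
  exact mem_nhds_iff.mpr ⟨f '' M, image_mono hMC, himg ▸ hM.preimage hg,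
    ⟨x₀, hxM, hftx⟩⟩

include hp hq hpq hqp hqe in
/-- A nontrivial continuum forces the existence of a compact neighborhood. -/
lemma aux_continuum (𝓑 : Set (Set G)) (hbase : IsTopologicalBasis 𝓑)
    (hbc : ∀ U ∈ 𝓑, IsCompact (closure U \ U))
    {C₀ : Set G} (hC : IsCompact C₀) (hCc : IsPreconnected C₀)
    {a b : G} (ha : a ∈ C₀) (hb : b ∈ C₀) (hab : a ≠ b) :
    ∃ x₀ : G, ∃ C : Set G, C ∈ nhds x₀ ∧ IsCompact C := by
  have hex : ∃ u, q (a, u) ≠ q (b, u) := by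
    by_contra h
    push_neg at h
    apply hab
    have h2 : ∀ v, p (a, v) = p (b, v) := by
      intro v
      have h3 := h (p (b, v))
      rw [hqp] at h3
      calc p (a, v) = p (a, q (a, p (b, v))) := by rw [h3]
        _ = p (b, v) := hpq _ _
    have h4 := h2 e
    rwa [aux_p_e e p q hpq hqe, aux_p_e e p q hpq hqe] at h4
  obtain ⟨u0, hu0⟩ := hex
  obtain ⟨V0, V1, hV0, hV1, hy0, hy1, hdisj⟩ := t2_separation hu0
  obtain ⟨U, hUB, hy0U, hUV0⟩ := hbase.exists_subset_of_mem_open hy0 hV0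
  have hUopen : IsOpen U := hbase.isOpen hUB
  have hy1cl : q (b, u0) ∉ closure U := by
    intro h
    have h2 : q (b, u0) ∈ closure V0 := closure_mono hUV0 h
    obtain ⟨z, hz1, hz0⟩ := mem_closure_iff.mp h2 V1 hV1 hy1
    exact absurd (mem_inter hz0 hz1) (by rw [hdisj.inter_eq]; exact notMem_empty z)
  set B := closure U \ U with hB_def
  have hBc : IsCompact B := hbc U hUB
  set O := {u : G | q (a, u) ∈ U ∧ q (b, u) ∉ closure U} with hO_def
  have hOopen : IsOpen O := by
    apply IsOpen.inter
    · exact hUopen.preimage (hq.comp (continuous_const.prodMk continuous_id))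
    · exact isClosed_closure.isOpen_compl.preimage
        (hq.comp (continuous_const.prodMk continuous_id))
  have hu0O : u0 ∈ O := ⟨hy0U, hy1cl⟩
  set P := p '' (C₀ ×ˢ B) with hP_def
  have hPc : IsCompact P := (hC.prod hBc).image hp
  have hOP : O ⊆ P := by
    intro u hu
    set D := (fun w => q (w, u)) '' C₀ with hD_def
    have hDc : IsPreconnected D :=
      hCc.image _ (Continuous.continuousOn
        (hq.comp (continuous_id.prodMk continuous_const)))
    have hmeet : (D ∩ B).Nonempty := by
      by_contra hno
      rw [not_nonempty_iff_eq_empty] at hno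
      have hsub : D ⊆ U ∪ (closure U)ᶜ := by
        intro d hd
        by_cases hdc : d ∈ closure U
        · left
          by_contra hdU
          have hdB : d ∈ B := ⟨hdc, hdU⟩
          exact absurd (mem_inter hd hdB) (by rw [hno]; exact notMem_empty d)
        · right; exact hdc
      have h1 : (D ∩ U).Nonempty := ⟨q (a, u), ⟨a, ha, rfl⟩, hu.1⟩
      have h2 : (D ∩ (closure U)ᶜ).Nonempty := ⟨q (b, u), ⟨b, hb, rfl⟩, hu.2⟩
      obtain ⟨z, _, hz2, hz3⟩ := hDc U (closure U)ᶜ hUopen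
        isClosed_closure.isOpen_compl hsub h1 h2
      exact hz3 (subset_closure hz2)
    obtain ⟨d, ⟨w, hw, hwd⟩, hdB⟩ := hmeet
    have hpu : p (w, d) = u := by rw [← hwd]; exact hpq w u
    exact ⟨(w, d), mk_mem_prod hw hdB, hpu⟩
  refine ⟨u0, closure O, mem_nhds_iff.mpr ⟨O, subset_closure, hOopen, hu0O⟩, ?_⟩
  exact hPc.of_isClosed_subset isClosed_closure (hPc.isClosed.closure_subset_iff.mpr hOP)

include hp hq hpq hqp hqe in
/-- With no compact neighborhoods anywhere, every compact set has small relatively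
clopen pieces. -/
lemma aux_trace (𝓑 : Set (Set G)) (hbase : IsTopologicalBasis 𝓑)
    (hbc : ∀ U ∈ 𝓑, IsCompact (closure U \ U))
    (hnc : ¬ ∃ x₀ : G, ∃ C : Set G, C ∈ nhds x₀ ∧ IsCompact C)
    {K : Set G} (hK : IsCompact K) {b : G} (hb : b ∈ K) {S : Set G}
    (hS : IsOpen S) (hbS : b ∈ S) :
    ∃ T : Set G, b ∈ T ∧ T ⊆ K ∩ S ∧ IsCompact T ∧ IsCompact (K \ T) := by
  have htd : TotallyDisconnectedSpace ↥K := by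
    constructor
    intro t _ ht z1 hz1 z2 hz2
    by_contra hne
    set s := (Subtype.val : ↥K → G) '' t with hs_def
    have hsc : IsPreconnected s := ht.image _ continuous_subtype_val.continuousOn
    have hclc : IsPreconnected (closure s) := hsc.closure
    have hsK : s ⊆ K := by rintro _ ⟨w, _, rfl⟩; exact w.2
    have hcls_sub : closure s ⊆ K := hK.isClosed.closure_subset_iff.mpr hsK
    have hcomp : IsCompact (closure s) := hK.of_isClosed_subset isClosed_closure hcls_sub
    have h1 : (z1 : G) ∈ closure s := subset_closure ⟨z1, hz1, rfl⟩
    have h2 : (z2 : G) ∈ closure s := subset_closure ⟨z2, hz2, rfl⟩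
    have hvne : (z1 : G) ≠ (z2 : G) := fun h => hne (Subtype.ext h)
    exact hnc (aux_continuum e p q hp hq hpq hqp hqe 𝓑 hbase hbc hcomp hclc h1 h2 hvne)
  haveI : CompactSpace ↥K := isCompact_iff_compactSpace.mp hK
  have hSb : (Subtype.val ⁻¹' S : Set ↥K) ∈ nhds (⟨b, hb⟩ : ↥K) :=
    (hS.preimage continuous_subtype_val).mem_nhds hbS
  obtain ⟨t, ⟨hbt, htcl⟩, htS⟩ := (nhds_basis_clopen (⟨b, hb⟩ : ↥K)).mem_iff.mp hSb
  refine ⟨Subtype.val '' t, ⟨⟨b, hb⟩, hbt, rfl⟩, ?_, ?_, ?_⟩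
  · rintro _ ⟨z, hz, rfl⟩
    exact ⟨z.2, htS hz⟩
  · exact (htcl.1.isCompact).image continuous_subtype_val
  · have heq : K \ (Subtype.val '' t) = Subtype.val '' (tᶜ) := by
      ext z
      constructor
      · rintro ⟨hzK, hzn⟩
        exact ⟨⟨z, hzK⟩, fun h => hzn ⟨_, h, rfl⟩, rfl⟩
      · rintro ⟨w, hw, rfl⟩
        refine ⟨w.2, ?_⟩
        rintro ⟨w', hw', he'⟩
        exact hw (Subtype.ext he' ▸ hw')
    rw [heq]
    exact ((htcl.2.isClosed_compl).isCompact).image continuous_subtype_val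

include hp hq hpq hqp hqe in
/-- Around any point inside an open set, there is an open set with compact boundary
avoiding a given compact set. -/
lemma aux_diamond (𝓑 : Set (Set G)) (hbase : IsTopologicalBasis 𝓑)
    (hbc : ∀ U ∈ 𝓑, IsCompact (closure U \ U))
    (hnc : ¬ ∃ x₀ : G, ∃ C : Set G, C ∈ nhds x₀ ∧ IsCompact C)
    {K S : Set G} (hK : IsCompact K) (hS : IsOpen S) {x0 : G} (hx : x0 ∈ S) :
    ∃ V : Set G, IsOpen V ∧ x0 ∈ V ∧ closure V ⊆ S ∧
      IsCompact (closure V \ V) ∧ (closure V \ V) ∩ K = ∅ := by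
  have hreg : ∀ (z : G) (S' : Set G), IsOpen S' → z ∈ S' →
      ∃ V ∈ 𝓑, z ∈ V ∧ closure V ⊆ S' := by
    intro z S' hS' hz
    obtain ⟨T, hTo, hzT, hTcl⟩ := aux_R e p q hp hq hpq hqe
      isCompact_singleton hS' (singleton_subset_iff.mpr hz)
    obtain ⟨V, hV𝓑, hzV, hVT⟩ := hbase.exists_subset_of_mem_open
      (hzT rfl) hTo
    exact ⟨V, hV𝓑, hzV, (closure_mono hVT).trans hTcl⟩
  by_cases hbK : x0 ∈ K
  · obtain ⟨T, hbT, hTsub, hTc, hKTc⟩ := aux_trace e p q hp hq hpq hqp hqe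
      𝓑 hbase hbc hnc hK hbK hS hx
    set S' := S \ (K \ T) with hS'_def
    have hS'o : IsOpen S' := hS.sdiff hKTc.isClosed
    have hcov : ∀ t ∈ T, ∃ Vt ∈ 𝓑, t ∈ Vt ∧ closure Vt ⊆ S' := by
      intro t ht
      exact hreg t S' hS'o ⟨(hTsub ht).2, fun h => h.2 ht⟩
    choose! Vt hVt𝓑 hVtmem hVtcl using hcov
    obtain ⟨s, hsT, hsfin, hsub⟩ := hTc.elim_finite_subcover_image
      (fun t ht => hbase.isOpen (hVt𝓑 t ht))
      (fun t ht => mem_biUnion ht (hVtmem t ht))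
    set V := ⋃ t ∈ s, Vt t with hV_def
    have hVo : IsOpen V := isOpen_biUnion fun t ht => hbase.isOpen (hVt𝓑 t (hsT ht))
    have hVcleq : closure V = ⋃ t ∈ s, closure (Vt t) := hsfin.closure_biUnion _
    have hVclS : closure V ⊆ S' := by
      rw [hVcleq]
      exact iUnion₂_subset fun t ht => hVtcl t (hsT ht)
    have hbd : closure V \ V ⊆ ⋃ t ∈ s, (closure (Vt t) \ Vt t) :=
      aux_bdry_biUnion hsfin _
    refine ⟨V, hVo, hsub hbT, hVclS.trans diff_subset, ?_, ?_⟩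
    · exact IsCompact.of_isClosed_subset
        (hsfin.isCompact_biUnion fun t ht => hbc _ (hVt𝓑 t (hsT ht)))
        (isClosed_closure.sdiff hVo) hbd
    · rw [eq_empty_iff_forall_notMem]
      rintro y ⟨⟨hy1, hy2⟩, hyK⟩
      have hnKT : y ∉ K \ T := fun h => (hVclS hy1).2 h
      have hyT : y ∈ T := by_contra fun h => hnKT ⟨hyK, h⟩
      exact hy2 (hsub hyT)
  · obtain ⟨V, hV𝓑, hzV, hVcl⟩ := hreg x0 (S \ K) (hS.sdiff hK.isClosed) ⟨hx, hbK⟩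
    refine ⟨V, hbase.isOpen hV𝓑, hzV, hVcl.trans diff_subset, hbc V hV𝓑, ?_⟩
    rw [eq_empty_iff_forall_notMem]
    rintro y ⟨⟨hy1, _⟩, hy2⟩
    exact (hVcl hy1).2 hy2

end RectifiableMain

section RectifiableMain2

variable {G : Type*} [TopologicalSpace G] [T2Space G]
variable (e : G) (p q : G × G → G)
variable (hp : Continuous p) (hq : Continuous q)
variable (hpq : ∀ x y : G, p (x, q (x, y)) = y)
variable (hqp : ∀ x y : G, q (x, p (x, y)) = y)
variable (hqe : ∀ x : G, q (x, x) = e)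

include hp hq hpq hqp hqe in
/-- A compact set inside an open set admits an open neighborhood whose closure
stays inside, with compact boundary avoiding a given compact set. -/
lemma aux_club (𝓑 : Set (Set G)) (hbase : IsTopologicalBasis 𝓑)
    (hbc : ∀ U ∈ 𝓑, IsCompact (closure U \ U))
    (hnc : ¬ ∃ x₀ : G, ∃ C : Set G, C ∈ nhds x₀ ∧ IsCompact C)
    {B S K : Set G} (hB : IsCompact B) (hS : IsOpen S) (hBS : B ⊆ S)
    (hK : IsCompact K) :
    ∃ T : Set G, IsOpen T ∧ B ⊆ T ∧ closure T ⊆ S ∧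
      IsCompact (closure T \ T) ∧ (closure T \ T) ∩ K = ∅ := by
  have hcov : ∀ b ∈ B, ∃ V : Set G, IsOpen V ∧ b ∈ V ∧ closure V ⊆ S ∧
      IsCompact (closure V \ V) ∧ (closure V \ V) ∩ K = ∅ := fun b hb =>
    aux_diamond e p q hp hq hpq hqp hqe 𝓑 hbase hbc hnc hK hS (hBS hb)
  choose! V hVo hVm hVcl hVbc hVbK using hcov
  obtain ⟨s, hsB, hsfin, hsub⟩ := hB.elim_finite_subcover_image
    (fun b hb => hVo b hb) (fun b hb => mem_biUnion hb (hVm b hb))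
  set T := ⋃ b ∈ s, V b with hT_def
  have hTo : IsOpen T := isOpen_biUnion fun b hb => hVo b (hsB hb)
  have hTcleq : closure T = ⋃ b ∈ s, closure (V b) := hsfin.closure_biUnion _
  have hTclS : closure T ⊆ S := by
    rw [hTcleq]
    exact iUnion₂_subset fun b hb => hVcl b (hsB hb)
  have hbd : closure T \ T ⊆ ⋃ b ∈ s, (closure (V b) \ V b) := aux_bdry_biUnion hsfin _
  refine ⟨T, hTo, hsub, hTclS, ?_, ?_⟩
  · exact IsCompact.of_isClosed_subset
      (hsfin.isCompact_biUnion fun b hb => hVbc b (hsB hb))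
      (isClosed_closure.sdiff hTo) hbd
  · rw [eq_empty_iff_forall_notMem]
    rintro y ⟨hy1, hy2⟩
    obtain ⟨b, hb, hyb⟩ := mem_iUnion₂.mp (hbd hy1)
    exact absurd (mem_inter hyb hy2)
      (by rw [hVbK b (hsB hb)]; exact notMem_empty y)

include hp hq hpq hqp hqe in
/-- With no compact neighborhoods, the space is zero-dimensional. -/
lemma aux_clopen (𝓑 : Set (Set G)) (hbase : IsTopologicalBasis 𝓑)
    (hbc : ∀ U ∈ 𝓑, IsCompact (closure U \ U))
    (hloc : ∀ x : G, ∃ U ∈ nhds x, IsSigmaCompact (closure U))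
    (hnc : ¬ ∃ x₀ : G, ∃ C : Set G, C ∈ nhds x₀ ∧ IsCompact C)
    (x : G) (W : Set G) (hW : IsOpen W) (hxW : x ∈ W) :
    ∃ V : Set G, IsClopen V ∧ x ∈ V ∧ V ⊆ W := by
  obtain ⟨Nu, hNu, hsig⟩ := hloc x
  obtain ⟨Kf, hKfc, hKfU⟩ := hsig
  have hxint : x ∈ interior Nu := mem_interior_iff_mem_nhds.mpr hNu
  obtain ⟨U₀, hU₀𝓑, hxU₀, hU₀sub⟩ := hbase.exists_subset_of_mem_open
    (⟨hxW, hxint⟩ : x ∈ W ∩ interior Nu) (hW.inter isOpen_interior)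
  have hU₀W : U₀ ⊆ W := fun z hz => (hU₀sub hz).1
  have hU₀cl : closure U₀ ⊆ closure Nu :=
    closure_mono (fun z hz => interior_subset (hU₀sub hz).2)
  set K' : ℕ → Set G := fun n => Kf n ∩ closure U₀ with hK'_def
  have hK'c : ∀ n, IsCompact (K' n) := fun n => (hKfc n).inter_right isClosed_closure
  set Kle : ℕ → Set G := fun n => ⋃ m : Fin n, K' m with hKle_def
  have hKlec : ∀ n, IsCompact (Kle n) := fun n => isCompact_iUnion fun m => hK'c m
  have hcl : closure U₀ ⊆ ⋃ n, Kle n := by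
    intro y hy
    have hyK : y ∈ ⋃ n, Kf n := by rw [hKfU]; exact hU₀cl hy
    obtain ⟨m, hm⟩ := mem_iUnion.mp hyK
    exact mem_iUnion.mpr ⟨m + 1, mem_iUnion.mpr ⟨⟨m, Nat.lt_succ_self m⟩, hm, hy⟩⟩
  -- The invariant for the recursive construction.
  set Inv : ℕ → Set G × Set G → Prop := fun n s =>
    IsOpen s.1 ∧ x ∈ s.1 ∧ s.1 ⊆ U₀ ∧ IsCompact (closure s.1 \ s.1) ∧
    (closure s.1 \ s.1) ∩ Kle n = ∅ ∧ IsOpen s.2 ∧ (closure s.1 \ s.1) ⊆ s.2 ∧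
    closure s.2 ∩ (Kle n ∪ {x}) = ∅ with hInv_def
  set R : ℕ → Set G × Set G → Set G × Set G → Prop := fun _ s s' =>
    s'.1 ⊆ s.1 ∧ s.1 \ s.2 ⊆ s'.1 ∧ s'.2 ⊆ s.2 with hR_def
  have hKle0 : Kle 0 = ∅ := by
    simp only [hKle_def]
    exact iUnion_of_empty _
  have h0 : ∃ s, Inv 0 s := by
    have hB₀c : IsCompact (closure U₀ \ U₀) := hbc U₀ hU₀𝓑
    have hxB₀ : closure U₀ \ U₀ ⊆ ({x}ᶜ : Set G) := fun z hz h =>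
      hz.2 (by rw [mem_singleton_iff.mp h]; exact hxU₀)
    obtain ⟨Z₀, hZ₀o, hBZ₀, hZ₀cl⟩ := aux_R e p q hp hq hpq hqe hB₀c
      isClosed_singleton.isOpen_compl hxB₀
    refine ⟨(U₀, Z₀), hbase.isOpen hU₀𝓑, hxU₀, subset_rfl, hB₀c, ?_, hZ₀o, hBZ₀, ?_⟩
    · rw [hKle0, inter_empty]
    · rw [hKle0, empty_union, eq_empty_iff_forall_notMem]
      rintro z ⟨hz1, hz2⟩
      exact (hZ₀cl hz1) hz2
  have hstep : ∀ n s, Inv n s → ∃ s', Inv (n + 1) s' ∧ R n s s' := by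
    rintro n ⟨V, Z⟩ ⟨hVo, hxV, hVU, hBc, hBK, hZo, hBZ, hZK⟩
    obtain ⟨T, hTo, hBT, hTcl, hTbc, hTbK⟩ := aux_club e p q hp hq hpq hqp hqe
      𝓑 hbase hbc hnc hBc hZo hBZ (hKlec (n + 1))
    have hxnZ : x ∉ closure Z := fun h =>
      absurd (mem_inter h (Or.inr rfl)) (by rw [hZK]; exact notMem_empty x)
    have hxnT : x ∉ closure T := fun h => hxnZ (subset_closure (hTcl h))
    set V' := V \ closure T with hV'_def
    have hV'o : IsOpen V' := hVo.sdiff isClosed_closure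
    have hxV' : x ∈ V' := ⟨hxV, hxnT⟩
    have hB' : closure V' \ V' ⊆ closure T \ T := by
      rintro y ⟨hy1, hy2⟩
      by_cases hyT : y ∈ T
      · exfalso
        obtain ⟨z, hz1, hz2⟩ := mem_closure_iff.mp hy1 T hTo hyT
        exact hz2.2 (subset_closure hz1)
      · by_cases hyct : y ∈ closure T
        · exact ⟨hyct, hyT⟩
        · exfalso
          have hyV : y ∉ V := fun h => hy2 ⟨h, hyct⟩
          have hycl : y ∈ closure V := closure_mono diff_subset hy1
          exact hyT (hBT ⟨hycl, hyV⟩)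
    have hB'closed : IsClosed (closure V' \ V') := isClosed_closure.sdiff hV'o
    have hB'c : IsCompact (closure V' \ V') :=
      hTbc.of_isClosed_subset hB'closed hB'
    have hB'K : (closure V' \ V') ∩ Kle (n + 1) = ∅ := by
      rw [eq_empty_iff_forall_notMem]
      rintro y ⟨hy1, hy2⟩
      exact absurd (mem_inter (hB' hy1) hy2) (by rw [hTbK]; exact notMem_empty y)
    have hB'sub : closure V' \ V' ⊆ (Kle (n + 1) ∪ {x})ᶜ := by
      intro y hy
      rintro (hyK | hyx)
      · exact absurd (mem_inter hy hyK) (by rw [hB'K]; exact notMem_empty y)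
      · rw [mem_singleton_iff.mp hyx] at hy
        exact hxnT (hB' hy).1
    obtain ⟨Y, hYo, hB'Y, hYcl⟩ := aux_R e p q hp hq hpq hqe hB'c
      (((hKlec (n + 1)).isClosed.union isClosed_singleton).isOpen_compl) hB'sub
    refine ⟨(V', Y ∩ Z), ⟨hV'o, hxV', (diff_subset.trans hVU), hB'c, hB'K,
      hYo.inter hZo, ?_, ?_⟩, diff_subset, ?_, inter_subset_right⟩
    · intro y hy
      exact ⟨hB'Y hy, hTcl (hB' hy).1⟩
    · rw [eq_empty_iff_forall_notMem]
      rintro z ⟨hz1, hz2⟩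
      exact (hYcl (closure_mono inter_subset_left hz1)) hz2
    · intro z hz
      exact ⟨hz.1, fun h => hz.2 (hTcl h)⟩
  obtain ⟨f, hInv, hRf⟩ := auxDepChoice Inv R h0 hstep
  set Vs : ℕ → Set G := fun n => (f n).1 with hVs_def
  set Zs : ℕ → Set G := fun n => (f n).2 with hZs_def
  have hVstep : ∀ n, Vs (n + 1) ⊆ Vs n := fun n => (hRf n).1
  have hZstep : ∀ n, Zs (n + 1) ⊆ Zs n := fun n => (hRf n).2.2
  have hVmono : ∀ n k, Vs (n + k) ⊆ Vs n := by
    intro n k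
    induction k with
    | zero => exact subset_rfl
    | succ k ih => exact (hVstep (n + k)).trans ih
  have hVmono' : ∀ m n, m ≤ n → Vs n ⊆ Vs m := by
    intro m n hmn
    obtain ⟨k, rfl⟩ := Nat.exists_eq_add_of_le hmn
    exact hVmono m k
  have hZmono : ∀ n k, Zs (n + k) ⊆ Zs n := by
    intro n k
    induction k with
    | zero => exact subset_rfl
    | succ k ih => exact (hZstep (n + k)).trans ih
  have hZmono' : ∀ m n, m ≤ n → Zs n ⊆ Zs m := by
    intro m n hmn
    obtain ⟨k, rfl⟩ := Nat.exists_eq_add_of_le hmn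
    exact hZmono m k
  have hkey : ∀ n m, n ≤ m → Vs n \ closure (Zs n) ⊆ Vs m := by
    intro n m hnm
    obtain ⟨k, rfl⟩ := Nat.exists_eq_add_of_le hnm
    clear hnm
    induction k with
    | zero => exact diff_subset
    | succ k ih =>
      intro y hy
      have hyVk : y ∈ Vs (n + k) := ih hy
      have hynZ : y ∉ Zs (n + k) := fun h => hy.2 (subset_closure (hZmono n k h))
      exact (hRf (n + k)).2.1 ⟨hyVk, hynZ⟩
  set Vinf := ⋂ n, Vs n with hVinf_def
  have hxVinf : x ∈ Vinf := mem_iInter.mpr fun n => (hInv n).2.1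
  have hVinfU₀ : Vinf ⊆ U₀ := (iInter_subset _ 0).trans (hInv 0).2.2.1
  have hzone : ∀ z ∈ closure U₀, ∃ n, z ∈ Kle n ∧ z ∉ closure (Zs n) := by
    intro z hz
    obtain ⟨n, hn⟩ := mem_iUnion.mp (hcl hz)
    refine ⟨n, hn, fun h => ?_⟩
    exact (eq_empty_iff_forall_notMem.mp (hInv n).2.2.2.2.2.2.2) z
      (mem_inter h (Or.inl hn))
  have hlocstable : ∀ n, Vs n ∩ (closure (Zs n))ᶜ ⊆ Vinf := by
    intro n z hz
    rw [mem_iInter]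
    intro m
    rcases le_total n m with h | h
    · exact hkey n m h ⟨hz.1, hz.2⟩
    · exact hVmono' m n h hz.1
  have hopen : IsOpen Vinf := by
    rw [isOpen_iff_forall_mem_open]
    intro y hy
    obtain ⟨n, hyK, hyZ⟩ := hzone y (subset_closure (hVinfU₀ hy))
    exact ⟨Vs n ∩ (closure (Zs n))ᶜ, hlocstable n,
      (hInv n).1.inter isClosed_closure.isOpen_compl,
      ⟨mem_iInter.mp hy n, hyZ⟩⟩
  have hclosed : IsClosed Vinf := by
    rw [← closure_subset_iff_isClosed]
    intro z hz
    have hzU₀ : z ∈ closure U₀ := closure_mono hVinfU₀ hz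
    obtain ⟨n, hzK, hzZ⟩ := hzone z hzU₀
    by_cases hzV : z ∈ Vs n
    · exact hlocstable n ⟨hzV, hzZ⟩
    · exfalso
      have hzcl : z ∈ closure (Vs n) := closure_mono (iInter_subset _ n) hz
      exact (eq_empty_iff_forall_notMem.mp (hInv n).2.2.2.2.1) z
        (mem_inter (⟨hzcl, hzV⟩ : z ∈ closure (Vs n) \ Vs n) hzK)
  exact ⟨Vinf, ⟨hclosed, hopen⟩, hxVinf, hVinfU₀.trans hU₀W⟩

end RectifiableMain2

/-- Every locally σ-compact Hausdorff rectifiable space with a bc-base is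
locally compact or zero-dimensional. -/
theorem locallyCompact_or_zeroDim_of_locally_sigmaCompact_bcBase
    {G : Type*} [TopologicalSpace G] [T2Space G] (e : G) (p q : G × G → G)
    (hp : Continuous p) (hq : Continuous q)
    (hpq : ∀ x y : G, p (x, q (x, y)) = y)
    (hqp : ∀ x y : G, q (x, p (x, y)) = y)
    (hqe : ∀ x : G, q (x, x) = e)
    (hloc : ∀ x : G, ∃ U ∈ nhds x, IsSigmaCompact (closure U))
    (𝓑 : Set (Set G)) (hbase : TopologicalSpace.IsTopologicalBasis 𝓑)
    (hbc : ∀ U ∈ 𝓑, IsCompact (closure U \ U)) :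
    LocallyCompactSpace G ∨
      ∀ (x : G) (W : Set G), IsOpen W → x ∈ W →
        ∃ V : Set G, IsClopen V ∧ x ∈ V ∧ V ⊆ W := by
  by_cases h : ∃ x₀ : G, ∃ C : Set G, C ∈ nhds x₀ ∧ IsCompact C
  · left
    haveI := aux_wlc e p q hp hq hpq hqp hqe h
    infer_instance
  · right
    exact fun x W hW hxW =>
      aux_clopen e p q hp hq hpq hqp hqe 𝓑 hbase hbc hloc h x W hW hxW
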